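/- Let k ≥ 2 be an integer and q ≥ 2 an integer. There exists a constant C > 0 (depending only on q and k) such that for all real x ≥ 2, ∑_{n ≤ x} |h(n)| ≤ C·x^{1/k}·(log x)^{π(q)}, where π(q) is the number of primes at most q. -/

import Mathlib

open Complex Finset
open scoped Classical

/-- `h(n) = ∑ μ(a)` over pairs `(a,b)` of positive integers with `a^k b = n` and every prime
factor of `b` dividing `q`; the `n`-th Dirichlet coefficient of `P(s)/ζ(ks)`. -/
noncomputable def hcoef (q k n : ℕ) : ℤ :=
  ∑ a ∈ n.divisors,
    if a ^ k ∣ n ∧ ∀ p : ℕ, p.Prime → p ∣ n / a ^ k → p ∣ q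
    then ArithmeticFunction.moebius a else 0

private lemma abs_hcoef_le (q k n : ℕ) :
    |(hcoef q k n : ℝ)| ≤
      ((n.divisors.filter fun a =>
        a ^ k ∣ n ∧ ∀ p : ℕ, p.Prime → p ∣ n / a ^ k → p ∣ q).card : ℝ) := by
  classical
  rw [hcoef]
  push_cast
  refine (Finset.abs_sum_le_sum_abs _ _).trans ?_
  rw [← Finset.sum_boole]
  refine Finset.sum_le_sum fun a _ => ?_
  split
  · exact_mod_cast ArithmeticFunction.abs_moebius_le_one
  · simp

/-- `∑_{n ≤ x} |h(n)| ≪_{q,k} x^{1/k} (log x)^{π(q)}`. -/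
theorem sum_abs_hcoef (k : ℕ) (hk : 2 ≤ k) (q : ℕ) (hq : 2 ≤ q) :
    ∃ C : ℝ, 0 < C ∧ ∀ x : ℝ, 2 ≤ x →
      ∑ n ∈ Finset.Icc 1 ⌊x⌋₊, |(hcoef q k n : ℝ)|
        ≤ C * x ^ (1 / (k : ℝ)) * Real.log x ^ q.primeCounting := by
  classical
  have hlog2 : (0:ℝ) < Real.log 2 := Real.log_pos one_lt_two
  refine ⟨(2 / Real.log 2) ^ q.primeCounting, by positivity, fun x hx => ?_⟩
  have hx0 : (0:ℝ) < x := by linarith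
  have hlogx : Real.log 2 ≤ Real.log x := Real.log_le_log (by norm_num) hx
  set N := ⌊x⌋₊ with hNdef
  have hN2 : 2 ≤ N := Nat.le_floor (by exact_mod_cast hx)
  have hN0 : N ≠ 0 := by omega
  have hNx : (N : ℝ) ≤ x := Nat.floor_le (le_of_lt hx0)
  have hk0 : k ≠ 0 := by omega
  set M := ⌊x ^ (1 / (k:ℝ))⌋₊ with hMdef
  set L := Nat.log 2 N with hLdef
  set P : ℕ → ℕ → Prop :=
    fun n a => a ^ k ∣ n ∧ ∀ p : ℕ, p.Prime → p ∣ n / a ^ k → p ∣ q with hP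
  set FS : Finset ℕ :=
    (Finset.Icc 1 N).filter (fun b => ∀ p : ℕ, p.Prime → p ∣ b → p ∣ q) with hFSdef
  -- Step 1: pointwise bound
  have step1 : ∑ n ∈ Finset.Icc 1 N, |(hcoef q k n : ℝ)|
      ≤ ∑ n ∈ Finset.Icc 1 N, ((n.divisors.filter (P n)).card : ℝ) :=
    Finset.sum_le_sum fun n _ => abs_hcoef_le q k n
  -- Step 2: double counting
  have step2 : ∑ n ∈ Finset.Icc 1 N, ((n.divisors.filter (P n)).card)
      = ((Finset.Icc 1 N).sigma fun n => n.divisors.filter (P n)).card :=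
    (Finset.card_sigma _ _).symm
  -- Step 3: injection into a product
  have step3 : ((Finset.Icc 1 N).sigma fun n => n.divisors.filter (P n)).card
      ≤ ((Finset.Icc 1 M) ×ˢ FS).card := by
    apply Finset.card_le_card_of_injOn (fun z => (z.2, z.1 / z.2 ^ k))
    · rintro ⟨n, a⟩ hz
      rw [Finset.mem_coe, Finset.mem_sigma, Finset.mem_filter, Nat.mem_divisors] at hz
      obtain ⟨hnN, ⟨hadvd, hn0⟩, hak, hfri⟩ := hz
      rw [Finset.mem_Icc] at hnN
      have hn1 : 1 ≤ n := hnN.1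
      have ha1 : 1 ≤ a := Nat.pos_of_dvd_of_pos hadvd hn1
      have hakn : a ^ k ≤ n := Nat.le_of_dvd hn1 hak
      have haM : a ≤ M := by
        rw [hMdef]
        apply Nat.le_floor
        have h1 : ((a:ℝ) ^ k) ^ ((k:ℝ)⁻¹) ≤ x ^ ((k:ℝ)⁻¹) := by
          apply Real.rpow_le_rpow (by positivity) _ (by positivity)
          calc ((a:ℝ) ^ k) ≤ (n:ℝ) := by exact_mod_cast hakn
            _ ≤ (N:ℝ) := by exact_mod_cast hnN.2
            _ ≤ x := hNx
        rw [Real.pow_rpow_inv_natCast (by positivity) hk0] at h1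
        rw [one_div]
        exact h1
      have hb1 : 1 ≤ n / a ^ k := Nat.one_le_div_iff (by positivity) |>.mpr hakn
      have hbN : n / a ^ k ≤ N := (Nat.div_le_self _ _).trans hnN.2
      simp only [Finset.mem_coe, Finset.mem_product, Finset.mem_Icc, hFSdef, Finset.mem_filter]
      exact ⟨⟨ha1, haM⟩, ⟨hb1, hbN⟩, hfri⟩
    · rintro ⟨n, a⟩ hz ⟨n', a'⟩ hz' heq
      rw [Finset.mem_coe, Finset.mem_sigma, Finset.mem_filter] at hz hz'
      obtain ⟨-, -, hak, -⟩ := hz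
      obtain ⟨-, -, hak', -⟩ := hz'
      simp only [Prod.mk.injEq] at heq
      obtain ⟨ha, hb⟩ := heq
      subst ha
      dsimp only at hak hak' hb
      have hn : n = n' := by
        have h1 : n = a ^ k * (n / a ^ k) := (Nat.mul_div_cancel' hak).symm
        have h2 : n' = a ^ k * (n' / a ^ k) := (Nat.mul_div_cancel' hak').symm
        rw [h1, h2, hb]
      subst hn
      rfl
  -- Step 4: friable count
  have hω : q.primeFactors.card ≤ q.primeCounting := by
    rw [Nat.primeCounting, Nat.primeCounting', Nat.count_eq_card_filter_range]
    apply Finset.card_le_card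
    intro p hp
    rw [Nat.mem_primeFactors] at hp
    rw [Finset.mem_filter, Finset.mem_range]
    exact ⟨Nat.lt_succ_of_le (Nat.le_of_dvd (by omega) hp.2.1), hp.1⟩
  have hfactle : ∀ b ∈ FS, ∀ p : ℕ, b.factorization p ≤ L := by
    intro b hb p
    rw [hFSdef, Finset.mem_filter, Finset.mem_Icc] at hb
    by_cases hp : p.Prime
    · have hdvd : p ^ b.factorization p ∣ b := Nat.ordProj_dvd b p
      have h2 : 2 ^ b.factorization p ≤ N := by
        calc 2 ^ b.factorization p ≤ p ^ b.factorization p :=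
              Nat.pow_le_pow_left hp.two_le _
          _ ≤ b := Nat.le_of_dvd hb.1.1 hdvd
          _ ≤ N := hb.1.2
      exact (Nat.le_log_iff_pow_le one_lt_two hN0).mpr h2
    · simp [Nat.factorization_eq_zero_of_not_prime b hp]
  have step4 : FS.card ≤ (L + 1) ^ q.primeFactors.card := by
    have := Finset.card_le_card_of_injOn (s := FS) (t := Finset.univ)
      (f := fun (b : ℕ) (p : q.primeFactors) => (⟨min (b.factorization p) L, by omega⟩ : Fin (L+1)))
      (fun _ _ => Finset.mem_univ _) ?_
    · simpa [Finset.card_univ, Fintype.card_fun, Fintype.card_coe] using this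
    · intro b hb b' hb' heq
      rw [Finset.mem_coe] at hb hb'
      have hbmem := hb; have hb'mem := hb'
      rw [hFSdef, Finset.mem_filter, Finset.mem_Icc] at hbmem hb'mem
      have hb0 : b ≠ 0 := by omega
      have hb'0 : b' ≠ 0 := by omega
      have hsub : ∀ c : ℕ, c ∈ FS → c.primeFactors ⊆ q.primeFactors := by
        intro c hc p hp
        rw [hFSdef, Finset.mem_filter] at hc
        rw [Nat.mem_primeFactors] at hp ⊢
        exact ⟨hp.1, hc.2 p hp.1 hp.2.1, by omega⟩
      apply Nat.factorization_inj (by simpa using hb0) (by simpa using hb'0)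
      ext p
      by_cases hpq : p ∈ q.primeFactors
      · have := congrFun heq ⟨p, hpq⟩
        simp only [Fin.mk.injEq] at this
        rwa [min_eq_left (hfactle b hb p), min_eq_left (hfactle b' hb' p)] at this
      · have h1 : p ∉ b.primeFactors := fun h => hpq (hsub b hb h)
        have h2 : p ∉ b'.primeFactors := fun h => hpq (hsub b' hb' h)
        rw [← Nat.support_factorization] at h1 h2
        rw [Finsupp.notMem_support_iff.mp h1, Finsupp.notMem_support_iff.mp h2]
  -- real estimates
  have hLreal : (L : ℝ) + 1 ≤ 2 / Real.log 2 * Real.log x := by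
    have h2L : (2:ℝ) ^ L ≤ x := by
      calc (2:ℝ) ^ L ≤ (N:ℝ) := by exact_mod_cast Nat.pow_log_le_self 2 hN0
        _ ≤ x := hNx
    have := Real.log_le_log (by positivity) h2L
    rw [Real.log_pow] at this
    rw [div_mul_eq_mul_div, le_div_iff₀ hlog2]
    nlinarith
  have hMreal : (M : ℝ) ≤ x ^ (1 / (k:ℝ)) := Nat.floor_le (by positivity)
  have hFSreal : (FS.card : ℝ) ≤ (2 / Real.log 2 * Real.log x) ^ q.primeCounting := by
    calc (FS.card : ℝ) ≤ ((L + 1 : ℕ) : ℝ) ^ q.primeFactors.card := by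
          exact_mod_cast step4
      _ ≤ ((L + 1 : ℕ) : ℝ) ^ q.primeCounting := by
          apply pow_le_pow_right₀ (by exact_mod_cast Nat.succ_le_succ (Nat.zero_le L)) hω
      _ ≤ (2 / Real.log 2 * Real.log x) ^ q.primeCounting := by
          apply pow_le_pow_left₀ (by positivity)
          push_cast
          exact hLreal
  -- assemble
  calc ∑ n ∈ Finset.Icc 1 N, |(hcoef q k n : ℝ)|
      ≤ ∑ n ∈ Finset.Icc 1 N, ((n.divisors.filter (P n)).card : ℝ) := step1
    _ = (((Finset.Icc 1 N).sigma fun n => n.divisors.filter (P n)).card : ℝ) := by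
        rw [← step2]; push_cast; rfl
    _ ≤ (((Finset.Icc 1 M) ×ˢ FS).card : ℝ) := by exact_mod_cast step3
    _ = (M : ℝ) * (FS.card : ℝ) := by
        rw [Finset.card_product, Nat.card_Icc]; push_cast; ring
    _ ≤ x ^ (1 / (k:ℝ)) * (2 / Real.log 2 * Real.log x) ^ q.primeCounting := by
        apply mul_le_mul hMreal hFSreal (by positivity) (by positivity)
    _ = (2 / Real.log 2) ^ q.primeCounting * x ^ (1 / (k:ℝ))
          * Real.log x ^ q.primeCounting := by
        rw [mul_pow]; ring
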